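/- Let H be a finite graph and let V be the F₂-vector space of F₂-valued functions on the vertices of H, with bilinear form ⟨f,g⟩ = Σ_{(u,v) edge} (f(u)g(v) + f(v)g(u)). Let Q(f) = |supp f| + e(supp f) mod 2, where e(S) is the number of edges of H with both endpoints in S. Then Q is a quadratic function for ⟨·,·⟩: Q(f+g) = Q(f) + Q(g) + ⟨f,g⟩. -/

import Mathlib

open Finset

private lemma zmod2_cases (a : ZMod 2) : a = 0 ∨ a = 1 := by revert a; decide

private lemma suppA {W : Type} [Fintype W] (f : W → ZMod 2) :
    ((Set.ncard {v | f v = 1} : ℕ) : ZMod 2) = ∑ v : W, f v := by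
  classical
  have h : {v | f v = 1}.ncard = (Finset.univ.filter fun v => f v = 1).card := by
    rw [Set.ncard_eq_toFinset_card']
    congr 1
    ext v; simp
  rw [h, Finset.card_filter]
  push_cast
  apply Finset.sum_congr rfl
  intro v _
  rcases zmod2_cases (f v) with h | h <;> simp [h]

private lemma edgeB {W : Type} [Fintype W] (G : SimpleGraph W) [DecidableRel G.Adj]
    (f : W → ZMod 2) :
    ((Set.ncard {e : Sym2 W | e ∈ G.edgeSet ∧ ∀ v ∈ e, f v = 1} : ℕ) : ZMod 2) =
      ∑ e ∈ G.edgeFinset, Sym2.lift ⟨fun u v => f u * f v, fun u v => mul_comm _ _⟩ e := by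
  classical
  have h : {e : Sym2 W | e ∈ G.edgeSet ∧ ∀ v ∈ e, f v = 1}.ncard =
      (G.edgeFinset.filter fun e => ∀ v ∈ e, f v = 1).card := by
    rw [Set.ncard_eq_toFinset_card']
    congr 1
    ext e; simp
  rw [h, Finset.card_filter]
  push_cast
  apply Finset.sum_congr rfl
  intro e _
  induction e with
  | _ u v =>
    by_cases hc : ∀ x ∈ s(u, v), f x = 1
    · have hu := hc u (by simp)
      have hv := hc v (by simp)
      simp [hc, hu, hv]
    · simp only [if_neg hc, Sym2.lift_mk]
      push_neg at hc
      obtain ⟨x, hx, hne⟩ := hc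
      have hx0 : f x = 0 := (zmod2_cases (f x)).resolve_right hne
      rw [Sym2.mem_iff] at hx
      rcases hx with rfl | rfl <;> simp [hx0]

private lemma dartsum {W : Type} [Fintype W] (G : SimpleGraph W) [DecidableRel G.Adj]
    (F : W → W → ZMod 2) :
    (∑ u : W, ∑ v : W, (if G.Adj u v then F u v else 0)) = ∑ d : G.Dart, F d.fst d.snd := by
  classical
  rw [← Finset.sum_product']
  rw [Finset.sum_ite, Finset.sum_const_zero, add_zero]
  refine (Finset.sum_bij' (fun (p : W × W) h => (⟨p, (Finset.mem_filter.1 h).2⟩ : G.Dart))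
    (fun d _ => d.toProd) ?_ ?_ ?_ ?_ ?_) <;> simp [SimpleGraph.Dart.ext_iff]

private lemma crossC {W : Type} [Fintype W] (G : SimpleGraph W) [DecidableRel G.Adj]
    (f g : W → ZMod 2) :
    (∑ u : W, ∑ v : W, (if G.Adj u v then f u * g v else 0)) =
      ∑ e ∈ G.edgeFinset, Sym2.lift ⟨fun u v => f u * g v + f v * g u,
        fun u v => by ring⟩ e := by
  classical
  rw [dartsum]
  rw [← Finset.sum_fiberwise_of_maps_to (g := SimpleGraph.Dart.edge) (t := G.edgeFinset)
    (fun d _ => SimpleGraph.mem_edgeFinset.2 d.edge_mem)]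
  apply Finset.sum_congr rfl
  intro e he
  rw [SimpleGraph.mem_edgeFinset] at he
  induction e with
  | _ u v =>
    let d : G.Dart := ⟨(u, v), he⟩
    have hfib : (Finset.univ.filter fun d' : G.Dart => d'.edge = s(u, v)) =
        {d, d.symm} := by
      ext d'
      simp only [Finset.mem_filter, Finset.mem_univ, true_and, Finset.mem_insert,
        Finset.mem_singleton]
      exact SimpleGraph.dart_edge_eq_iff d' d
    rw [hfib, Finset.sum_pair d.symm_ne.symm]
    simp [d, SimpleGraph.Dart.symm]

/-- The quadratic function of a graph: `Q f = |supp f| + e(supp f) mod 2`, where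
`e(S)` is the number of edges with both endpoints in `S`. -/
noncomputable def Qfun {W : Type} (G : SimpleGraph W) (f : W → ZMod 2) : ZMod 2 :=
  ((Set.ncard {v | f v = 1} +
    Set.ncard {e : Sym2 W | e ∈ G.edgeSet ∧ ∀ v ∈ e, f v = 1} : ℕ) : ZMod 2)

/-- `Q` is a quadratic function for the bilinear form
`⟨f,g⟩ = Σ_{(u,v) adjacent} f u * g v`: `Q(f+g) = Q f + Q g + ⟨f,g⟩`. -/
theorem stmt_15 (W : Type) [Fintype W] (G : SimpleGraph W) [DecidableRel G.Adj]
    (f g : W → ZMod 2) :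
    Qfun G (f + g) = Qfun G f + Qfun G g +
      ∑ u : W, ∑ v : W, (if G.Adj u v then f u * g v else 0) := by
  unfold Qfun
  push_cast
  rw [suppA, suppA, suppA, edgeB, edgeB, edgeB, crossC]
  have h1 : (∑ v : W, (f + g) v) = (∑ v : W, f v) + ∑ v : W, g v := by
    simp [Finset.sum_add_distrib]
  have h2 : (∑ e ∈ G.edgeFinset,
        Sym2.lift ⟨fun u v => (f + g) u * (f + g) v, fun u v => mul_comm _ _⟩ e) =
      (∑ e ∈ G.edgeFinset, Sym2.lift ⟨fun u v => f u * f v, fun u v => mul_comm _ _⟩ e) +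
      (∑ e ∈ G.edgeFinset, Sym2.lift ⟨fun u v => g u * g v, fun u v => mul_comm _ _⟩ e) +
      ∑ e ∈ G.edgeFinset, Sym2.lift ⟨fun u v => f u * g v + f v * g u,
        fun u v => by ring⟩ e := by
    rw [← Finset.sum_add_distrib, ← Finset.sum_add_distrib]
    apply Finset.sum_congr rfl
    intro e _
    induction e with
    | _ u v =>
      simp only [Sym2.lift_mk, Pi.add_apply]
      ring
  rw [h1, h2]
  ring
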